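/- Let m ≥ 1 and λ ∈ (0, 2). Define h : ℝ^m → ℝ by h(t) = Σ_{i=1}^m (t_i − 1)^2 + λ·(Σ_{i=1}^m t_i − √(Σ_{i=1}^m t_i^2)). Then the unique minimizer of h over {t ∈ ℝ^m : t ≥ 0} is t* with t*_i = c(λ) = (λ/√m − λ + 2)/2 for all i, and h(t*) = g*(λ) = λ·((1 − λ/4)·m + (λ/2 − 1)·√m − λ/4). That is, h(t) ≥ g*(λ) for all t ≥ 0, with equality if and only if t = t*. -/

import Mathlib

set_option maxHeartbeats 1000000


/-- For `λ ∈ (0,2)`, the unique minimizer of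
`h(t) = ∑(tᵢ−1)² + λ(∑ tᵢ − √(∑ tᵢ²))` over `{t ≥ 0}` is the constant vector
`t* ≡ c(λ) = (λ/√m − λ + 2)/2`, with value `g*(λ) = λ((1−λ/4)m + (λ/2−1)√m − λ/4)`;
i.e., `h(t) ≥ g*(λ)` for all `t ≥ 0`, with equality iff `t = t*`. -/
theorem h_min_over_orthant (m : ℕ) (hm : 1 ≤ m) (lam : ℝ)
    (hlam0 : 0 < lam) (hlam2 : lam < 2)
    (c gstar : ℝ)
    (hc : c = (lam / Real.sqrt m - lam + 2) / 2)
    (hgstar : gstar = lam * ((1 - lam / 4) * m + (lam / 2 - 1) * Real.sqrt m - lam / 4))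
    (h : (Fin m → ℝ) → ℝ)
    (hh : ∀ t, h t = (∑ i, (t i - 1) ^ 2)
      + lam * ((∑ i, t i) - Real.sqrt (∑ i, t i ^ 2))) :
    (∀ t : Fin m → ℝ, (∀ i, 0 ≤ t i) → gstar ≤ h t) ∧
    (∀ t : Fin m → ℝ, (∀ i, 0 ≤ t i) → (h t = gstar ↔ ∀ i, t i = c)) := by

  have hm0 : (0:ℝ) < m := by exact_mod_cast Nat.lt_of_lt_of_le Nat.zero_lt_one hm
  set s := Real.sqrt m with hs
  have hs0 : 0 < s := Real.sqrt_pos.mpr hm0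
  have hs2 : s ^ 2 = (m:ℝ) := Real.sq_sqrt hm0.le
  have hsc : s * c = (lam - lam * s + 2 * s) / 2 := by
    rw [hc]; field_simp
  have hc0 : 0 < c := by
    have := div_pos hlam0 hs0
    rw [hc]; nlinarith
  have hg2 : gstar = (m:ℝ) - (s * c) ^ 2 := by
    rw [hgstar, ← hs2, hsc]; ring
  -- variance identity
  have hvar : ∀ t : Fin m → ℝ,
      (m:ℝ) * (∑ i, (t i - (∑ j, t j)/m)^2)
        = (m:ℝ) * (∑ i, t i ^ 2) - (∑ i, t i)^2 := by
    intro t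
    have e1 : ∑ i, (t i - (∑ j, t j)/m)^2
        = (∑ i, t i ^ 2) - 2*((∑ j, t j)/m)*(∑ i, t i) + (m:ℝ)*((∑ j, t j)/m)^2 := by
      rw [Finset.sum_congr rfl (fun i _ => by
        show (t i - (∑ j, t j)/m)^2 = t i ^ 2 - 2*((∑ j, t j)/m)* t i + ((∑ j, t j)/m)^2
        ring)]
      rw [Finset.sum_add_distrib, Finset.sum_sub_distrib, ← Finset.mul_sum,
        Finset.sum_const, Finset.card_univ, Fintype.card_fin, nsmul_eq_mul]
    rw [e1]; field_simp; ring
  -- expansion of the squared term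
  have hexp : ∀ t : Fin m → ℝ,
      (∑ i, (t i - 1)^2) = (∑ i, t i ^ 2) - 2*(∑ i, t i) + (m:ℝ) := by
    intro t
    rw [Finset.sum_congr rfl (fun i _ => by
      show (t i - 1)^2 = t i ^ 2 - 2 * t i + 1
      ring)]
    rw [Finset.sum_add_distrib, Finset.sum_sub_distrib, ← Finset.mul_sum,
      Finset.sum_const, Finset.card_univ, Fintype.card_fin, nsmul_eq_mul, mul_one]
  -- main identity and Cauchy-Schwarz
  have hid : ∀ t : Fin m → ℝ, (∀ i, 0 ≤ t i) →
      h t - gstar = (Real.sqrt (∑ i, t i ^ 2) - s * c) ^ 2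
        + (2 - lam) * (s * Real.sqrt (∑ i, t i ^ 2) - ∑ i, t i) ∧
      (∑ i, t i) ≤ s * Real.sqrt (∑ i, t i ^ 2) := by
    intro t ht
    set S := ∑ i, t i with hS
    set Q := ∑ i, t i ^ 2 with hQ
    have hQ0 : 0 ≤ Q := Finset.sum_nonneg (fun i _ => sq_nonneg _)
    set N := Real.sqrt Q with hN
    have hN0 : 0 ≤ N := Real.sqrt_nonneg _
    have hN2 : N ^ 2 = Q := Real.sq_sqrt hQ0
    have hS0 : 0 ≤ S := Finset.sum_nonneg (fun i _ => ht i)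
    have hCS : S ^ 2 ≤ (m:ℝ) * Q := by
      have := hvar t
      nlinarith [Finset.sum_nonneg (fun i (_ : i ∈ Finset.univ) => sq_nonneg (t i - S/m))]
    have hSN : S ≤ s * N := by
      have h1 : S ^ 2 ≤ (s * N) ^ 2 := by nlinarith [hs2, hN2]
      exact le_of_pow_le_pow_left₀ two_ne_zero (mul_nonneg hs0.le hN0) h1
    refine ⟨?_, hSN⟩
    rw [hh, ← hS, ← hQ, ← hN, hexp t, ← hS, ← hQ, hg2]
    nlinarith [hsc, hN2]
  constructor
  · intro t ht
    obtain ⟨hid1, hid2⟩ := hid t ht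
    nlinarith [sq_nonneg (Real.sqrt (∑ i, t i ^ 2) - s * c)]
  · intro t ht
    obtain ⟨hid1, hid2⟩ := hid t ht
    set S := ∑ i, t i with hSdef
    set Q := ∑ i, t i ^ 2 with hQdef
    have hQ0 : 0 ≤ Q := Finset.sum_nonneg (fun i _ => sq_nonneg _)
    set N := Real.sqrt Q with hNdef
    have hN2 : N ^ 2 = Q := Real.sq_sqrt hQ0
    have hNdefn : N = Real.sqrt Q := hNdef
    clear_value S Q N
    constructor
    · intro heq
      have hsum0 : (N - s * c) ^ 2 + (2 - lam) * (s * N - S) = 0 := by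
        rw [← hid1, heq]; ring
      have hB0 : 0 ≤ (2 - lam) * (s * N - S) :=
        mul_nonneg (by linarith) (by linarith)
      have hA : (N - s * c) ^ 2 = 0 := le_antisymm (by linarith [sq_nonneg (N - s*c)]) (sq_nonneg _)
      have hNc : N = s * c := by
        have := sq_eq_zero_iff.mp hA
        linarith
      have hB : (2 - lam) * (s * N - S) = 0 := by linarith [sq_nonneg (N - s*c)]
      have hz2 : S = s * N := by
        rcases mul_eq_zero.mp hB with h1 | h1
        · linarith
        · linarith
      have hCSeq : (m:ℝ) * Q - S ^ 2 = 0 := by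
        rw [hz2]; linear_combination (-(N^2)) * hs2 - (m:ℝ) * hN2
      have hvz : (∑ i, (t i - S/m)^2) = 0 := by
        have h1 := hvar t
        rw [← hSdef, ← hQdef] at h1
        have h2 : (m:ℝ) * (∑ i, (t i - S/m)^2) = 0 := by linarith
        rcases mul_eq_zero.mp h2 with h3 | h3
        · exact absurd h3 (ne_of_gt hm0)
        · exact h3
      intro i
      have hti := (Finset.sum_eq_zero_iff_of_nonneg
        (fun i (_ : i ∈ Finset.univ) => sq_nonneg (t i - S/m))).mp hvz i (Finset.mem_univ i)
      have hti' : t i = S/m := by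
        have := sq_eq_zero_iff.mp hti
        linarith
      have hSm : S = (m:ℝ) * c := by
        linear_combination hz2 + s * hNc + c * hs2
      rw [hti', hSm]
      field_simp
    · intro htc
      have hSv : S = (m:ℝ) * c := by
        rw [hSdef, Finset.sum_congr rfl (fun i _ => htc i), Finset.sum_const,
          Finset.card_univ, Fintype.card_fin, nsmul_eq_mul]
      have hQv : Q = (m:ℝ) * c ^ 2 := by
        rw [hQdef, Finset.sum_congr rfl (fun i _ => by rw [htc i]), Finset.sum_const,
          Finset.card_univ, Fintype.card_fin, nsmul_eq_mul]
      have hNv : N = s * c := by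
        rw [hNdefn, hQv, ← hs2, show s ^ 2 * c ^ 2 = (s*c)^2 by ring]
        exact Real.sqrt_sq (by positivity)
      rw [hNv, hSv] at hid1
      linear_combination hid1 + (2 - lam) * c * hs2
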